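/- Let p ≥ 5 be prime and m ≥ 2 an integer with p ∤ m. Set M = m·∑_{k=1}^{m-1} binom(⌊kp/m⌋+1, 2). Then (-1)^{(p-1)(m-1)/2} q^M ∏_{k=1}^{m-1} C(p-1, ⌊kp/m⌋)_{q^m} ≡ m·(q^m;q^m)_{p-1}/(q;q)_{p-1} - m + 1 (mod [p]_q²) in ℤ[q]. -/

import Mathlib

open Polynomial Finset

section Helpers
variable {R : Type*} [CommRing R]

lemma prodLin (ε : R) (hε : ε * ε = 0) (s : Finset ℕ) (x y w : ℕ → R)
    (h : ∀ j ∈ s, x j * w j = 1) :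
    ∏ j ∈ s, (x j + ε * y j) = (∏ j ∈ s, x j) * (1 + ε * ∑ j ∈ s, y j * w j) := by
  classical
  induction s using Finset.cons_induction with
  | empty => simp
  | cons a s ha ih =>
    rw [Finset.prod_cons, Finset.prod_cons, Finset.sum_cons,
      ih (fun j hj => h j (Finset.mem_cons_of_mem hj))]
    have hxa : x a * w a = 1 := h a (Finset.mem_cons_self a s)
    linear_combination ((∏ j ∈ s, x j) * y a * (∑ j ∈ s, y j * w j)) * hε -
      ((∏ j ∈ s, x j) * ε * y a) * hxa

lemma one_sub_pow_sq_zero (ε : R) (hε : ε * ε = 0) (b : ℕ) :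
    (1 - ε) ^ b = 1 - (b : R) * ε := by
  induction b with
  | zero => simp
  | succ n ih =>
    rw [pow_succ, ih]
    push_cast
    linear_combination (n : R) * hε

end Helpers

/-- Existence of Gaussian binomials (in variable X^m) as integer polynomials. -/
lemma gbm_exists (m : ℕ) : ∀ n k : ℕ, k ≤ n → ∃ B : ℤ[X],
    B * (∏ j ∈ Finset.Icc 1 k, (1 - X^(m*j))) * (∏ j ∈ Finset.Icc 1 (n-k), (1 - X^(m*j)))
      = ∏ j ∈ Finset.Icc 1 n, (1 - X^(m*j)) := by
  intro n
  induction n with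
  | zero => intro k hk; interval_cases k; exact ⟨1, by simp⟩
  | succ n ih =>
    intro k hk
    rcases Nat.eq_zero_or_pos k with rfl | hk0
    · exact ⟨1, by simp⟩
    rcases eq_or_lt_of_le hk with rfl | hklt
    · exact ⟨1, by simp⟩
    have hk1 : k ≤ n := Nat.lt_succ_iff.mp hklt
    obtain ⟨B1, hB1⟩ := ih (k-1) (le_trans (Nat.sub_le _ _) hk1)
    obtain ⟨B2, hB2⟩ := ih k hk1
    refine ⟨B1 + X^(m*k) * B2, ?_⟩
    obtain ⟨k', rfl⟩ : ∃ k', k = k' + 1 := ⟨k - 1, (Nat.succ_pred_eq_of_pos hk0).symm⟩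
    rw [Nat.add_sub_cancel] at hB1
    have e1 : n - k' = (n - (k'+1)) + 1 := by omega
    have e2 : n + 1 - (k'+1) = n - k' := by omega
    rw [e2, e1]
    rw [e1, Finset.prod_Icc_succ_top (by omega)] at hB1
    rw [Finset.prod_Icc_succ_top (by omega)] at hB2
    rw [Finset.prod_Icc_succ_top (by omega), Finset.prod_Icc_succ_top (by omega),
      Finset.prod_Icc_succ_top (by omega)]
    have h2 : m * (n+1) = m * (k'+1) + m * (n - (k'+1) + 1) := by
      rw [← Nat.mul_add]; congr 1; omega
    rw [h2, pow_add]
    linear_combination (1 - (X:ℤ[X])^(m*(k'+1))) * hB1 +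
      (X:ℤ[X])^(m*(k'+1)) * (1 - (X:ℤ[X])^(m*(n-(k'+1)+1))) * hB2



lemma div_pair {u v : ℕ} (hcop : Nat.Coprime v u) (hu : 1 ≤ u) {k : ℕ}
    (hk1 : 1 ≤ k) (hk2 : k < v) : k*u/v + (v-k)*u/v = u - 1 := by
  have hv : 0 < v := by omega
  have key : ∀ t, 1 ≤ t → t < v → t * u % v ≠ 0 := by
    intro t ht1 ht2 h
    have hdvd : v ∣ t * u := Nat.dvd_of_mod_eq_zero h
    have hvt : v ∣ t := hcop.dvd_of_dvd_mul_right hdvd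
    have := Nat.le_of_dvd (by omega) hvt
    omega
  have h1 : v * (k*u/v) + k*u % v = k*u := Nat.div_add_mod _ _
  have h2 : v * ((v-k)*u/v) + (v-k)*u % v = (v-k)*u := Nat.div_add_mod _ _
  have h3 : k*u + (v-k)*u = v*u := by rw [← Nat.add_mul]; congr 1; omega
  have hr1 : k*u % v ≠ 0 := key k hk1 hk2
  have hr2 : (v-k)*u % v ≠ 0 := key (v-k) (by omega) (by omega)
  have hr1' : k*u % v < v := Nat.mod_lt _ hv
  have hr2' : (v-k)*u % v < v := Nat.mod_lt _ hv
  have h4 : v*(k*u/v + (v-k)*u/v) + (k*u % v + (v-k)*u % v) = v*u := by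
    rw [Nat.mul_add]; omega
  have hdvd : v ∣ k*u % v + (v-k)*u % v := by
    have h5 : k*u % v + (v-k)*u % v = v*u - v*(k*u/v + (v-k)*u/v) := by omega
    rw [h5]
    exact Nat.dvd_sub (Dvd.intro u rfl) (Dvd.intro _ rfl)
  obtain ⟨d, hd⟩ := hdvd
  have hd1 : d = 1 := by
    rcases d with _ | _ | d
    · omega
    · rfl
    · exfalso
      have : v * 2 ≤ v * (d+1+1) := Nat.mul_le_mul_left v (by omega)
      omega
  subst hd1
  rw [hd, Nat.mul_one] at h4
  have h6 : v * (k*u/v + (v-k)*u/v + 1) = v * u := by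
    rw [Nat.mul_add, Nat.mul_one]; omega
  have h7 := Nat.eq_of_mul_eq_mul_left hv h6
  omega

lemma sum_div_pair {u v : ℕ} (hcop : Nat.Coprime v u) (hu : 1 ≤ u) (hv : 1 ≤ v) :
    2 * ∑ k ∈ Finset.Icc 1 (v-1), (k*u/v) = (v-1)*(u-1) := by
  have hre : ∑ k ∈ Finset.Icc 1 (v-1), (k*u/v) = ∑ k ∈ Finset.Icc 1 (v-1), ((v-k)*u/v) := by
    refine Finset.sum_nbij' (fun k => v - k) (fun k => v - k) ?_ ?_ ?_ ?_ ?_ <;>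
      intro a ha <;> simp only [Finset.mem_Icc] at ha ⊢
    · omega
    · omega
    · omega
    · omega
    · have h : v - (v - a) = a := by omega
      rw [h]
  have h2 : 2 * ∑ k ∈ Finset.Icc 1 (v-1), (k*u/v)
      = ∑ k ∈ Finset.Icc 1 (v-1), (k*u/v + (v-k)*u/v) := by
    rw [Finset.sum_add_distrib, ← hre]; ring
  have hconst : ∀ k ∈ Finset.Icc 1 (v-1), k*u/v + (v-k)*u/v = u - 1 := by
    intro k hk
    simp only [Finset.mem_Icc] at hk
    exact div_pair hcop hu hk.1 (by omega)
  rw [h2, Finset.sum_congr rfl hconst, Finset.sum_const, Nat.card_Icc, smul_eq_mul, Nat.add_sub_cancel]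

namespace QGran
noncomputable section

def PhiQ (p : ℕ) : ℚ[X] := ∑ i ∈ Finset.range p, X^i

abbrev Qt (p : ℕ) := ℚ[X] ⧸ Ideal.span {(PhiQ p)^2}

def qmk (p : ℕ) : ℚ[X] →+* Qt p := Ideal.Quotient.mk _

def om (p : ℕ) : Qt p := qmk p X

def ep (p : ℕ) : Qt p := 1 - (om p)^p

def w (p : ℕ) (t : ℕ) : Qt p := Ring.inverse (1 - (om p)^t)

variable {p : ℕ}

lemma qmk_X : qmk p X = om p := rfl

lemma qmk_Phi_sq : qmk p ((PhiQ p)^2) = 0 := by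
  rw [qmk, Ideal.Quotient.eq_zero_iff_mem]
  exact Ideal.subset_span rfl

lemma ep_eq : ep p = (1 - om p) * qmk p (PhiQ p) := by
  have h : (PhiQ p) * (X - 1) = X^p - 1 := geom_sum_mul X p
  have := congrArg (qmk p) h
  simp only [map_mul, map_sub, map_pow, map_one, qmk_X] at this
  rw [ep]
  linear_combination this

lemma ep_sq : ep p * ep p = 0 := by
  rw [ep_eq]
  have : (1 - om p) * qmk p (PhiQ p) * ((1 - om p) * qmk p (PhiQ p))
      = (1 - om p)^2 * qmk p ((PhiQ p)^2) := by
    rw [map_pow]; ring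
  rw [this, qmk_Phi_sq, mul_zero]

lemma om_pow_p : (om p)^p = 1 - ep p := by rw [ep]; ring

lemma om_pow_p_mul (b : ℕ) : (om p)^(p * b) = 1 - (b : Qt p) * ep p := by
  rw [pow_mul, om_pow_p, one_sub_pow_sq_zero _ ep_sq]

lemma PhiQ_eq_cyclotomic (hp : p.Prime) : PhiQ p = cyclotomic p ℚ := by
  haveI : Fact p.Prime := ⟨hp⟩
  rw [Polynomial.cyclotomic_prime ℚ p, PhiQ]

lemma not_dvd_one_sub_X_pow (hp : p.Prime) {t : ℕ} (ht : ¬ p ∣ t) :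
    ¬ (PhiQ p ∣ (1 - X^t)) := by
  intro hdvd
  obtain ⟨g, hg⟩ := hdvd
  have hζ := Complex.isPrimitiveRoot_exp p hp.ne_zero
  set ζ : ℂ := Complex.exp (2 * Real.pi * Complex.I / p)
  have hroot : (Polynomial.aeval ζ) (PhiQ p) = 0 := by
    rw [PhiQ_eq_cyclotomic hp]
    have := hζ.isRoot_cyclotomic hp.pos (R := ℂ)
    rw [Polynomial.IsRoot] at this
    rw [Polynomial.aeval_def, ← Polynomial.eval_map, Polynomial.map_cyclotomic]
    exact this
  have := congrArg (Polynomial.aeval ζ) hg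
  simp only [map_sub, map_pow, map_one, map_mul, Polynomial.aeval_X, hroot, zero_mul] at this
  have h1 : ζ ^ t = 1 := by linear_combination -this
  exact ht ((hζ.pow_eq_one_iff_dvd t).mp h1)

lemma isUnit_one_sub_om_pow (hp : p.Prime) {t : ℕ} (ht : ¬ p ∣ t) :
    IsUnit (1 - (om p)^t) := by
  have hirr : Irreducible (PhiQ p) := by
    rw [PhiQ_eq_cyclotomic hp]; exact Polynomial.cyclotomic.irreducible_rat hp.pos
  have hcop : IsCoprime ((PhiQ p)^2) (1 - X^t : ℚ[X]) :=
    ((hirr.coprime_iff_not_dvd).mpr (not_dvd_one_sub_X_pow hp ht)).pow_left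
  obtain ⟨u, v, huv⟩ := hcop
  have h2 : (qmk p (PhiQ p))^2 = 0 := by rw [← map_pow]; exact qmk_Phi_sq
  have := congrArg (qmk p) huv
  simp only [map_add, map_mul, map_sub, map_pow, map_one, qmk_X, h2, mul_zero, zero_add] at this
  exact IsUnit.of_mul_eq_one _ (by rw [mul_comm] at this; exact this)

lemma w_spec (hp : p.Prime) {t : ℕ} (ht : ¬ p ∣ t) : (1 - (om p)^t) * w p t = 1 :=
  Ring.mul_inverse_cancel _ (isUnit_one_sub_om_pow hp ht)

def D (p m : ℕ) (a : ℕ) : Qt p := ∏ j ∈ Finset.Icc 1 a, (1 - (om p)^(m*j))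
def S (p m : ℕ) (a : ℕ) : Qt p := ∑ j ∈ Finset.Icc 1 a, w p (m*j)
def Cc (p : ℕ) : Qt p := ∏ j ∈ Finset.Icc 1 (p-1), (1 - (om p)^j)

lemma not_dvd_mj (hp : p.Prime) (hpm : ¬ p ∣ m) {j : ℕ} (h1 : 1 ≤ j) (h2 : j ≤ p - 1) :
    ¬ p ∣ m * j := by
  intro h
  rcases (Nat.Prime.dvd_mul hp).mp h with h' | h'
  · exact hpm h'
  · have := Nat.le_of_dvd (by omega) h'
    have hp2 := hp.two_le
    omega

lemma isUnit_D (hp : p.Prime) (hpm : ¬ p ∣ m) {a : ℕ} (ha : a ≤ p - 1) :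
    IsUnit (D p m a) := by
  refine IsUnit.of_mul_eq_one (∏ j ∈ Finset.Icc 1 a, w p (m*j)) ?_
  rw [D, ← Finset.prod_mul_distrib]
  rw [Finset.prod_congr rfl (fun j hj => ?_), Finset.prod_const_one]
  simp only [Finset.mem_Icc] at hj
  exact w_spec hp (not_dvd_mj hp hpm hj.1 (by omega))

lemma isUnit_Cc (hp : p.Prime) : IsUnit (Cc p) := by
  refine IsUnit.of_mul_eq_one (∏ j ∈ Finset.Icc 1 (p-1), w p j) ?_
  rw [Cc, ← Finset.prod_mul_distrib]
  rw [Finset.prod_congr rfl (fun j hj => ?_), Finset.prod_const_one]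
  simp only [Finset.mem_Icc] at hj
  refine w_spec hp ?_
  intro h
  have := Nat.le_of_dvd (by omega) h
  have := hp.two_le
  omega

lemma Dsplit (a : ℕ) (ha : a ≤ p - 1) :
    D p m (p-1) = D p m ((p-1)-a) * ∏ j ∈ Finset.Icc 1 a, (1 - (om p)^(m*(p-j))) := by
  induction a with
  | zero => simp [D]
  | succ n ih =>
    have hn : n ≤ p - 1 := by omega
    rw [ih hn, Finset.prod_Icc_succ_top (by omega : 1 ≤ n + 1)]
    have e1 : (p-1) - n = ((p-1) - (n+1)) + 1 := by omega
    have e2 : (p-1) - (n+1) + 1 = p - (n+1) := by omega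
    rw [show D p m ((p-1)-n) = D p m ((p-1)-(n+1)) * (1 - (om p)^(m*(p-(n+1)))) by
      rw [D, D, e1, Finset.prod_Icc_succ_top (by omega : 1 ≤ (p-1)-(n+1)+1), e2]]
    ring

lemma stepA (hp : p.Prime) (hpm : ¬ p ∣ m) {a : ℕ} (ha : a ≤ p - 1) :
    (om p)^(m * ∑ j ∈ Finset.Icc 1 a, j) * D p m (p-1)
      = (-1)^a * (D p m a * D p m ((p-1)-a)) * (1 - (m : Qt p) * ep p * S p m a) := by
  have E1 : (om p)^(m * ∑ j ∈ Finset.Icc 1 a, j) = ∏ j ∈ Finset.Icc 1 a, (om p)^(m*j) := by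
    rw [Finset.prod_pow_eq_pow_sum, Finset.mul_sum]
  have E4 : ∀ j ∈ Finset.Icc 1 a, (om p)^(m*j) * (1 - (om p)^(m*(p-j)))
      = (((om p)^(m*j) - 1) + ep p * (m : Qt p)) := by
    intro j hj
    simp only [Finset.mem_Icc] at hj
    have hexp : m*j + m*(p-j) = p * m := by
      rw [← Nat.mul_add]
      have hp2 := hp.two_le
      have : j + (p - j) = p := by omega
      rw [this, Nat.mul_comm]
    have : (om p)^(m*j) * (om p)^(m*(p-j)) = 1 - (m : Qt p) * ep p := by
      rw [← pow_add, hexp, om_pow_p_mul]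
    linear_combination -this
  have E5 := prodLin (ep p) ep_sq (Finset.Icc 1 a)
      (fun j => (om p)^(m*j) - 1) (fun _ => (m : Qt p)) (fun j => -(w p (m*j)))
      (fun j hj => by
        simp only [Finset.mem_Icc] at hj
        have := w_spec hp (not_dvd_mj hp hpm hj.1 (by omega))
        linear_combination this)
  beta_reduce at E5
  have E6 : ∏ j ∈ Finset.Icc 1 a, ((om p)^(m*j) - 1) = (-1)^a * D p m a := by
    calc ∏ j ∈ Finset.Icc 1 a, ((om p)^(m*j) - 1)
        = ∏ j ∈ Finset.Icc 1 a, ((-1) * (1 - (om p)^(m*j))) :=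
          Finset.prod_congr rfl (fun j _ => by ring)
      _ = (∏ _j ∈ Finset.Icc 1 a, (-1 : Qt p)) * D p m a := by
          rw [Finset.prod_mul_distrib]; rfl
      _ = (-1)^a * D p m a := by
          rw [Finset.prod_const, Nat.card_Icc, Nat.add_sub_cancel]
  have E7 : ∑ j ∈ Finset.Icc 1 a, (m : Qt p) * -(w p (m*j)) = -((m : Qt p) * S p m a) := by
    rw [S, Finset.mul_sum, ← Finset.sum_neg_distrib]
    exact Finset.sum_congr rfl (fun j _ => by ring)
  calc (om p)^(m * ∑ j ∈ Finset.Icc 1 a, j) * D p m (p-1)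
      = D p m ((p-1)-a) * ((∏ j ∈ Finset.Icc 1 a, (om p)^(m*j)) *
          ∏ j ∈ Finset.Icc 1 a, (1 - (om p)^(m*(p-j)))) := by
        rw [E1, Dsplit a ha]; ring
    _ = D p m ((p-1)-a) * ∏ j ∈ Finset.Icc 1 a, ((om p)^(m*j) * (1 - (om p)^(m*(p-j)))) := by
        rw [← Finset.prod_mul_distrib]
    _ = D p m ((p-1)-a) * ∏ j ∈ Finset.Icc 1 a, (((om p)^(m*j) - 1) + ep p * (m : Qt p)) := by
        rw [Finset.prod_congr rfl E4]
    _ = D p m ((p-1)-a) * ((∏ j ∈ Finset.Icc 1 a, ((om p)^(m*j) - 1)) *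
          (1 + ep p * ∑ j ∈ Finset.Icc 1 a, (m : Qt p) * -(w p (m*j)))) := by rw [E5]
    _ = (-1)^a * (D p m a * D p m ((p-1)-a)) * (1 - (m : Qt p) * ep p * S p m a) := by
        rw [E6, E7]; ring


lemma sigma2 (a : ℕ) : 2 * ∑ j ∈ Finset.Icc 1 a, j = a * (a+1) := by
  induction a with
  | zero => simp
  | succ n ih =>
    rw [Finset.sum_Icc_succ_top (by omega), Nat.mul_add, ih]
    ring

lemma sigma_eq (a : ℕ) : ∑ j ∈ Finset.Icc 1 a, j = (a+1).choose 2 := by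
  have h1 := sigma2 a
  have h2 : (a+1) * (a+1-1) = a * (a+1) := by rw [Nat.add_sub_cancel]; ring
  rw [Nat.choose_two_right]
  omega

lemma prodOneSub (s : Finset ℕ) (t : ℕ → Qt p) :
    ∏ k ∈ s, (1 - (m : Qt p) * ep p * t k) = 1 - (m : Qt p) * ep p * ∑ k ∈ s, t k := by
  classical
  induction s using Finset.cons_induction with
  | empty => simp
  | cons a s ha ih =>
    rw [Finset.prod_cons, Finset.sum_cons, ih]
    linear_combination ((m : Qt p) * (m : Qt p) * t a * ∑ k ∈ s, t k) * (ep_sq (p := p))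

lemma B_prod (hp : p.Prime) (hpm : ¬ p ∣ m) (hm : 2 ≤ m) (h5 : 5 ≤ p) (bb : ℕ → Qt p)
    (HB : ∀ k ∈ Finset.Icc 1 (m-1),
      bb k * D p m (k*p/m) * D p m ((p-1) - k*p/m) = D p m (p-1)) :
    (om p)^(m * ∑ k ∈ Finset.Icc 1 (m-1), (k*p/m + 1).choose 2) * ∏ k ∈ Finset.Icc 1 (m-1), bb k
      = (-1)^((p-1)*(m-1)/2)
          * (1 - (m : Qt p) * ep p * ∑ k ∈ Finset.Icc 1 (m-1), S p m (k*p/m)) := by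
  have hcop : Nat.Coprime m p := ((hp.coprime_iff_not_dvd).mpr hpm).symm
  have ha : ∀ k ∈ Finset.Icc 1 (m-1), k*p/m ≤ p - 1 := fun k hk => by
    simp only [Finset.mem_Icc] at hk
    have := div_pair (u := p) (v := m) hcop (by omega) hk.1 (by omega)
    exact Nat.le.intro this
  have step : ∀ k ∈ Finset.Icc 1 (m-1),
      (om p)^(m * ((k*p/m + 1).choose 2)) * bb k
        = (-1)^(k*p/m) * (1 - (m : Qt p) * ep p * S p m (k*p/m)) := by
    intro k hk
    have hak := ha k hk
    have hu : IsUnit (D p m (k*p/m) * D p m ((p-1) - k*p/m)) :=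
      (isUnit_D hp hpm hak).mul (isUnit_D hp hpm (Nat.le_trans (Nat.sub_le _ _) (Nat.le_refl _)))
    apply hu.mul_left_cancel
    calc D p m (k*p/m) * D p m ((p-1) - k*p/m)
          * ((om p)^(m * ((k*p/m + 1).choose 2)) * bb k)
        = (om p)^(m * ∑ j ∈ Finset.Icc 1 (k*p/m), j)
            * (bb k * D p m (k*p/m) * D p m ((p-1) - k*p/m)) := by rw [sigma_eq]; ring
      _ = (om p)^(m * ∑ j ∈ Finset.Icc 1 (k*p/m), j) * D p m (p-1) := by rw [HB k hk]
      _ = (-1)^(k*p/m) * (D p m (k*p/m) * D p m ((p-1) - (k*p/m)))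
            * (1 - (m : Qt p) * ep p * S p m (k*p/m)) := stepA hp hpm hak
      _ = D p m (k*p/m) * D p m ((p-1) - k*p/m)
            * ((-1)^(k*p/m) * (1 - (m : Qt p) * ep p * S p m (k*p/m))) := by ring
  have hprod := Finset.prod_congr rfl step
  rw [Finset.prod_mul_distrib, Finset.prod_mul_distrib, Finset.prod_pow_eq_pow_sum,
    Finset.prod_pow_eq_pow_sum, prodOneSub, ← Finset.mul_sum] at hprod
  have hsum2 : ∑ k ∈ Finset.Icc 1 (m-1), k*p/m = (p-1)*(m-1)/2 := by
    have h2 := sum_div_pair (u := p) (v := m) hcop (by omega) (by omega)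
    rw [Nat.mul_comm (m-1) (p-1)] at h2
    omega
  rw [hsum2] at hprod
  exact hprod

lemma cmap_mem (hp : p.Prime) (hpm : ¬ p ∣ m) {j : ℕ} (h1 : 1 ≤ j) (h2 : j ≤ p-1) :
    1 ≤ m*j % p ∧ m*j % p ≤ p-1 := by
  have hp2 := hp.two_le
  have hlt : m*j % p < p := Nat.mod_lt _ (by omega)
  have hne : m*j % p ≠ 0 := fun h =>
    not_dvd_mj hp hpm h1 h2 (Nat.dvd_of_mod_eq_zero h)
  omega

lemma cmap_injOn (hp : p.Prime) (hpm : ¬ p ∣ m) :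
    Set.InjOn (fun j => m*j % p) ↑(Finset.Icc 1 (p-1)) := by
  intro a ha b hb h
  simp only [Finset.coe_Icc, Set.mem_Icc] at ha hb
  have hg : p.gcd m = 1 := (hp.coprime_iff_not_dvd).mpr hpm
  have hmod : a ≡ b [MOD p] := Nat.ModEq.cancel_left_of_coprime hg h
  have hp2 := hp.two_le
  have : a % p = b % p := hmod
  rw [Nat.mod_eq_of_lt (by omega), Nat.mod_eq_of_lt (by omega)] at this
  exact this

lemma cmap_surjOn (hp : p.Prime) (hpm : ¬ p ∣ m) :
    Set.SurjOn (fun j => m*j % p) ↑(Finset.Icc 1 (p-1)) ↑(Finset.Icc 1 (p-1)) := by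
  have hmem : ∀ a (_ : a ∈ Finset.Icc 1 (p-1)), m*a % p ∈ Finset.Icc 1 (p-1) := by
    intro a ha
    simp only [Finset.mem_Icc] at ha ⊢
    exact cmap_mem hp hpm ha.1 ha.2
  have := Finset.surj_on_of_inj_on_of_card_le (s := Finset.Icc 1 (p-1))
    (t := Finset.Icc 1 (p-1)) (fun a _ => m*a % p) hmem
    (fun a₁ a₂ h1 h2 h => cmap_injOn hp hpm (Finset.mem_coe.mpr h1) (Finset.mem_coe.mpr h2) h)
    (le_refl _)
  intro x hx
  obtain ⟨a, ha, hEq⟩ := this x (Finset.mem_coe.mp hx)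
  exact ⟨a, Finset.mem_coe.mpr ha, hEq.symm⟩

lemma creindex_sum (hp : p.Prime) (hpm : ¬ p ∣ m) {M : Type} [AddCommMonoid M] (F : ℕ → M) :
    ∑ j ∈ Finset.Icc 1 (p-1), F (m*j % p) = ∑ c ∈ Finset.Icc 1 (p-1), F c :=
  Finset.sum_nbij (fun j => m*j % p)
    (fun a ha => by
      simp only [Finset.mem_Icc] at ha ⊢; exact cmap_mem hp hpm ha.1 ha.2)
    (cmap_injOn hp hpm) (cmap_surjOn hp hpm) (fun a _ => rfl)

lemma creindex_prod (hp : p.Prime) (hpm : ¬ p ∣ m) {M : Type} [CommMonoid M] (F : ℕ → M) :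
    ∏ j ∈ Finset.Icc 1 (p-1), F (m*j % p) = ∏ c ∈ Finset.Icc 1 (p-1), F c :=
  Finset.prod_nbij (fun j => m*j % p)
    (fun a ha => by
      simp only [Finset.mem_Icc] at ha ⊢; exact cmap_mem hp hpm ha.1 ha.2)
    (cmap_injOn hp hpm) (cmap_surjOn hp hpm) (fun a _ => rfl)

lemma not_dvd_of_Icc (hp : p.Prime) {c : ℕ} (h1 : 1 ≤ c) (h2 : c ≤ p-1) : ¬ p ∣ c := by
  intro h
  have := Nat.le_of_dvd (by omega) h
  have := hp.two_le
  omega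

lemma stepB (hp : p.Prime) (hpm : ¬ p ∣ m) (ff : Qt p) (HF : ff * Cc p = D p m (p-1)) :
    ff = 1 + ep p * ∑ j ∈ Finset.Icc 1 (p-1),
      ((m*j/p : ℕ) : Qt p) * (om p)^(m*j % p) * w p (m*j % p) := by
  have E1 : ∀ j ∈ Finset.Icc 1 (p-1), (1 - (om p)^(m*j))
      = ((1 - (om p)^(m*j % p)) + ep p * (((m*j/p : ℕ) : Qt p) * (om p)^(m*j % p))) := by
    intro j hj
    have hsplit : p * (m*j/p) + m*j % p = m*j := Nat.div_add_mod _ _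
    have h2 : (om p)^(m*j) = (om p)^(p * (m*j/p)) * (om p)^(m*j % p) := by
      rw [← pow_add, hsplit]
    rw [h2, om_pow_p_mul]
    ring
  have E2 := prodLin (ep p) ep_sq (Finset.Icc 1 (p-1))
      (fun j => 1 - (om p)^(m*j % p)) (fun j => ((m*j/p : ℕ) : Qt p) * (om p)^(m*j % p))
      (fun j => w p (m*j % p))
      (fun j hj => by
        simp only [Finset.mem_Icc] at hj
        obtain ⟨hc1, hc2⟩ := cmap_mem hp hpm hj.1 hj.2
        exact w_spec hp (not_dvd_of_Icc hp hc1 hc2))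
  beta_reduce at E2
  have E3 : ∏ j ∈ Finset.Icc 1 (p-1), (1 - (om p)^(m*j % p)) = Cc p :=
    creindex_prod hp hpm (fun c => 1 - (om p)^c)
  have E4 : D p m (p-1) = Cc p * (1 + ep p * ∑ j ∈ Finset.Icc 1 (p-1),
      ((m*j/p : ℕ) : Qt p) * (om p)^(m*j % p) * w p (m*j % p)) := by
    rw [D, Finset.prod_congr rfl E1, E2, E3]
  rw [E4] at HF
  exact (isUnit_Cc hp).mul_left_cancel (by rw [mul_comm (Cc p) ff, HF])

lemma om_pow_p_eq : (om p)^p = 1 - ep p := by rw [ep]; ring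

lemma pairEq (hp : p.Prime) (h5 : 5 ≤ p) {c : ℕ} (h1 : 1 ≤ c) (h2 : c ≤ p-1) :
    ep p * w p c + ep p * w p (p - c) = ep p := by
  have hp2 := hp.two_le
  have f1 : (1 - (om p)^c) * w p c = 1 := w_spec hp (not_dvd_of_Icc hp h1 h2)
  have f2 : (1 - (om p)^(p-c)) * w p (p-c) = 1 :=
    w_spec hp (not_dvd_of_Icc hp (by omega) (by omega))
  have f3 : (om p)^c * (om p)^(p-c) = 1 - ep p := by
    rw [← pow_add, show c + (p - c) = p by omega, om_pow_p_eq]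
  have f4 : ep p * ep p = 0 := ep_sq
  have h5' : (1 - (om p)^c) * (1 - (om p)^(p-c))
      * (ep p * w p c + ep p * w p (p-c) - ep p) = 0 := by
    linear_combination (ep p * (1 - (om p)^(p-c))) * f1 + (ep p * (1 - (om p)^c)) * f2
      - ep p * f3 + f4
  linear_combination (w p c * w p (p-c)) * h5'
    - ((ep p * w p c + ep p * w p (p-c) - ep p) * ((1 - (om p)^(p-c)) * w p (p-c))) * f1
    - (ep p * w p c + ep p * w p (p-c) - ep p) * f2

lemma isUnit_two : IsUnit (2 : Qt p) := by
  refine IsUnit.of_mul_eq_one (algebraMap ℚ (Qt p) (1/2)) ?_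
  rw [show (2 : Qt p) = algebraMap ℚ (Qt p) 2 from (map_ofNat _ 2).symm, ← map_mul]
  norm_num

lemma w_pair_sum (hp : p.Prime) (h5 : 5 ≤ p) :
    ∑ c ∈ Finset.Icc 1 (p-1), ep p * w p c = (((p-1)/2 : ℕ) : Qt p) * ep p := by
  have hp2 := hp.two_le
  have hre : ∑ c ∈ Finset.Icc 1 (p-1), ep p * w p c
      = ∑ c ∈ Finset.Icc 1 (p-1), ep p * w p (p - c) := by
    refine Finset.sum_nbij' (fun c => p - c) (fun c => p - c) ?_ ?_ ?_ ?_ ?_ <;>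
      intro a ha <;> simp only [Finset.mem_Icc] at ha ⊢
    · omega
    · omega
    · omega
    · omega
    · have h : p - (p - a) = a := by omega
      rw [h]
  have h2 : (2 : Qt p) * ∑ c ∈ Finset.Icc 1 (p-1), ep p * w p c
      = ∑ c ∈ Finset.Icc 1 (p-1), (ep p * w p c + ep p * w p (p - c)) := by
    rw [Finset.sum_add_distrib, ← hre]; ring
  have h3 : ∑ c ∈ Finset.Icc 1 (p-1), (ep p * w p c + ep p * w p (p - c))
      = ((p-1 : ℕ) : Qt p) * ep p := by
    rw [Finset.sum_congr rfl (fun c hc => by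
      simp only [Finset.mem_Icc] at hc
      exact pairEq hp h5 hc.1 hc.2), Finset.sum_const, Nat.card_Icc, Nat.add_sub_cancel,
      nsmul_eq_mul]
  have hodd : p % 2 = 1 := Nat.odd_iff.mp (hp.odd_of_ne_two (by omega))
  have h4 : (p - 1 : ℕ) = 2 * ((p-1)/2) := by omega
  refine (isUnit_two (p := p)).mul_left_cancel ?_
  rw [h2, h3]
  have h5c : ((p - 1 : ℕ) : Qt p) = 2 * (((p-1)/2 : ℕ) : Qt p) := by
    rw [h4]
    push_cast [Nat.mul_div_cancel_left _ (by norm_num : 0 < 2)]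
    ring
  rw [h5c]
  ring

lemma ew_eq (hp : p.Prime) (hpm : ¬ p ∣ m) {j : ℕ} (h1 : 1 ≤ j) (h2 : j ≤ p-1) :
    ep p * w p (m*j) = ep p * w p (m*j % p) := by
  have hsplit : p * (m*j/p) + m*j % p = m*j := Nat.div_add_mod _ _
  have F1 : (1 - (om p)^(m*j)) * w p (m*j) = 1 := w_spec hp (not_dvd_mj hp hpm h1 h2)
  obtain ⟨hc1, hc2⟩ := cmap_mem hp hpm h1 h2
  have F2 : (1 - (om p)^(m*j % p)) * w p (m*j % p) = 1 :=
    w_spec hp (not_dvd_of_Icc hp hc1 hc2)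
  have F3 : ep p * (om p)^(m*j) = ep p * (om p)^(m*j % p) := by
    have h3 : (om p)^(m*j) = (om p)^(p * (m*j/p)) * (om p)^(m*j % p) := by
      rw [← pow_add, hsplit]
    rw [h3, om_pow_p_mul]
    linear_combination (-((m*j/p : ℕ) : Qt p) * (om p)^(m*j % p)) * (ep_sq (p := p))
  linear_combination (ep p * w p (m*j % p)) * F1 - (ep p * w p (m*j)) * F2
    + (w p (m*j) * w p (m*j % p)) * F3

lemma T_swap (hp : p.Prime) (hpm : ¬ p ∣ m) (hm : 2 ≤ m) :
    ∑ k ∈ Finset.Icc 1 (m-1), S p m (k*p/m)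
      = ∑ j ∈ Finset.Icc 1 (p-1), ((m-1) - m*j/p) • w p (m*j) := by
  have hcop : Nat.Coprime m p := ((hp.coprime_iff_not_dvd).mpr hpm).symm
  have hp2 := hp.two_le
  have ha : ∀ k, 1 ≤ k → k ≤ m-1 → k*p/m ≤ p-1 := fun k hk1 hk2 =>
    Nat.le.intro (div_pair (u := p) (v := m) hcop (by omega) hk1 (by omega))
  have h1 : ∀ k ∈ Finset.Icc 1 (m-1), S p m (k*p/m)
      = ∑ j ∈ Finset.Icc 1 (p-1), if j ≤ k*p/m then w p (m*j) else 0 := by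
    intro k hk
    simp only [Finset.mem_Icc] at hk
    rw [S, ← Finset.sum_filter]
    congr 1
    ext j
    simp only [Finset.mem_filter, Finset.mem_Icc]
    have := ha k hk.1 hk.2
    omega
  rw [Finset.sum_congr rfl h1, Finset.sum_comm]
  refine Finset.sum_congr rfl (fun j hj => ?_)
  simp only [Finset.mem_Icc] at hj
  rw [← Finset.sum_filter]
  have hfil : Finset.filter (fun k => j ≤ k*p/m) (Finset.Icc 1 (m-1))
      = Finset.Icc (m*j/p + 1) (m-1) := by
    ext k
    simp only [Finset.mem_filter, Finset.mem_Icc]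
    have hiff : (1 ≤ k ∧ k ≤ m - 1) → (j ≤ k*p/m ↔ m*j/p + 1 ≤ k) := by
      intro hk
      have fwd1 : j ≤ k*p/m ↔ j*m ≤ k*p := Nat.le_div_iff_mul_le (by omega)
      have fwd2 : m*j/p < k ↔ m*j < k*p := Nat.div_lt_iff_lt_mul (by omega)
      have hne : m*j ≠ k*p := by
        intro h
        exact not_dvd_mj hp hpm hj.1 hj.2 (h ▸ Dvd.intro k (by ring))
      have hcomm : j*m = m*j := Nat.mul_comm j m
      constructor
      · intro h
        have h1' := fwd1.mp h
        have h2' := fwd2.mpr (by omega)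
        omega
      · intro h
        have h2' := fwd2.mp (by omega)
        exact fwd1.mpr (by omega)
    constructor
    · rintro ⟨hk, hjk⟩
      exact ⟨(hiff hk).mp hjk, hk.2⟩
    · rintro ⟨hk1, hk2⟩
      have hk1' : 1 ≤ k := Nat.le_trans (Nat.le_add_left 1 _) hk1
      exact ⟨⟨hk1', hk2⟩, (hiff ⟨hk1', hk2⟩).mpr hk1⟩
  have hgen : ∀ b : ℕ, m - 1 + 1 - (b + 1) = m - 1 - b := fun b => by omega
  rw [hfil, Finset.sum_const, Nat.card_Icc, hgen]

lemma sum_b (hp : p.Prime) (hpm : ¬ p ∣ m) (hm : 2 ≤ m) (h5 : 5 ≤ p) :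
    ∑ j ∈ Finset.Icc 1 (p-1), m*j/p = ((p-1)/2) * (m-1) := by
  have hcop' : Nat.Coprime p m := (hp.coprime_iff_not_dvd).mpr hpm
  have hp2 := hp.two_le
  have h2 := sum_div_pair (u := m) (v := p) hcop' (by omega) (by omega)
  have hcg : ∑ j ∈ Finset.Icc 1 (p-1), j*m/p = ∑ j ∈ Finset.Icc 1 (p-1), m*j/p :=
    Finset.sum_congr rfl (fun j _ => by rw [Nat.mul_comm])
  rw [hcg] at h2
  have hodd : p % 2 = 1 := Nat.odd_iff.mp (hp.odd_of_ne_two (by omega))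
  have h4 : (p-1) = 2*((p-1)/2) := by omega
  have h5x : (p-1)*(m-1) = 2*(((p-1)/2)*(m-1)) := by
    conv_lhs => rw [h4]
    ring
  omega

lemma final_sum (hp : p.Prime) (hpm : ¬ p ∣ m) (hm : 2 ≤ m) (h5 : 5 ≤ p) :
    ep p * (∑ k ∈ Finset.Icc 1 (m-1), S p m (k*p/m))
      + ep p * (∑ j ∈ Finset.Icc 1 (p-1),
          ((m*j/p : ℕ) : Qt p) * (om p)^(m*j % p) * w p (m*j % p)) = 0 := by
  rw [T_swap hp hpm hm, Finset.mul_sum, Finset.mul_sum, ← Finset.sum_add_distrib]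
  have hterm : ∀ j ∈ Finset.Icc 1 (p-1),
      ep p * (((m-1) - m*j/p) • w p (m*j))
        + ep p * (((m*j/p : ℕ) : Qt p) * (om p)^(m*j % p) * w p (m*j % p))
      = ((m-1 : ℕ) : Qt p) * (ep p * w p (m*j % p)) - ((m*j/p : ℕ) : Qt p) * ep p := by
    intro j hj
    simp only [Finset.mem_Icc] at hj
    have hp2 := hp.two_le
    have hb : m*j/p ≤ m-1 := by
      have hj' : j < p := by omega
      have hlt : m*j < m*p := mul_lt_mul_of_pos_left hj' (by omega)
      have := (Nat.div_lt_iff_lt_mul (by omega : 0 < p)).mpr (by omega : m*j < m*p)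
      omega
    have hew := ew_eq hp hpm hj.1 hj.2
    obtain ⟨hc1, hc2⟩ := cmap_mem hp hpm hj.1 hj.2
    have F2 : (1 - (om p)^(m*j % p)) * w p (m*j % p) = 1 :=
      w_spec hp (not_dvd_of_Icc hp hc1 hc2)
    rw [nsmul_eq_mul, Nat.cast_sub hb]
    linear_combination (((m-1 : ℕ) : Qt p) - ((m*j/p : ℕ) : Qt p)) * hew
      - (((m*j/p : ℕ) : Qt p) * ep p) * F2
  rw [Finset.sum_congr rfl hterm, Finset.sum_sub_distrib]
  have hA : ∑ j ∈ Finset.Icc 1 (p-1), ((m-1 : ℕ) : Qt p) * (ep p * w p (m*j % p))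
      = ((m-1 : ℕ) : Qt p) * ((((p-1)/2 : ℕ) : Qt p) * ep p) := by
    rw [← Finset.mul_sum, creindex_sum hp hpm (fun c => ep p * w p c), w_pair_sum hp h5]
  have hB : ∑ j ∈ Finset.Icc 1 (p-1), ((m*j/p : ℕ) : Qt p) * ep p
      = (((p-1)/2 * (m-1) : ℕ) : Qt p) * ep p := by
    rw [← Finset.sum_mul, ← Nat.cast_sum, sum_b hp hpm hm h5]
  rw [hA, hB]
  push_cast
  ring

end
end QGran

open QGran

/-- `q`-analogue of Granville's congruence: for a prime `p ≥ 5` and `m ≥ 2` with `p ∤ m`,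
with `f = (q^m;q^m)_{p-1}/(q;q)_{p-1} ∈ ℤ[q]` and `B k = C(p-1, ⌊kp/m⌋)_{q^m}` the Gaussian
binomial coefficients in the variable `q^m` (characterized by their defining equations),
and `M = m ∑_{k=1}^{m-1} C(⌊kp/m⌋+1, 2)`, one has
`(-1)^((p-1)(m-1)/2) q^M ∏_{k=1}^{m-1} B k ≡ m·f - m + 1 (mod [p]_q²)` in `ℤ[q]`. -/
theorem q_granville (p m : ℕ) (hp : p.Prime) (h5 : 5 ≤ p) (hm : 2 ≤ m) (hpm : ¬ p ∣ m) :
    ∃ f : ℤ[X], ∃ B : ℕ → ℤ[X],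
      f * (∏ j ∈ Finset.Icc 1 (p-1), (1 - X^j)) = (∏ j ∈ Finset.Icc 1 (p-1), (1 - X^(m*j)))
      ∧ (∀ k ∈ Finset.Icc 1 (m-1),
          B k * (∏ j ∈ Finset.Icc 1 (k*p/m), (1 - X^(m*j)))
              * (∏ j ∈ Finset.Icc 1 ((p-1) - k*p/m), (1 - X^(m*j)))
            = (∏ j ∈ Finset.Icc 1 (p-1), (1 - X^(m*j))))
      ∧ (∑ i ∈ Finset.range p, (X : ℤ[X])^i)^2 ∣
          ((-1)^((p-1)*(m-1)/2)
              * X^(m * ∑ k ∈ Finset.Icc 1 (m-1), Nat.choose (k*p/m + 1) 2)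
              * (∏ k ∈ Finset.Icc 1 (m-1), B k)
            - ((m : ℤ[X]) * f - (m : ℤ[X]) + 1)) := by
  classical
  haveI : Fact p.Prime := ⟨hp⟩
  have hp2 := hp.two_le
  have hcop : Nat.Coprime m p := ((hp.coprime_iff_not_dvd).mpr hpm).symm
  have ha : ∀ k, 1 ≤ k → k ≤ m-1 → k*p/m ≤ p-1 := fun k hk1 hk2 =>
    Nat.le.intro (div_pair (u := p) (v := m) hcop (by omega) hk1 (by omega))
  -- construct f
  refine ⟨∏ j ∈ Finset.Icc 1 (p-1), (∑ i ∈ Finset.range m, ((X : ℤ[X])^j)^i),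
    fun k => if h : k*p/m ≤ p - 1 then Classical.choose (gbm_exists m (p-1) (k*p/m) h) else 0,
    ?_, ?_, ?_⟩
  · rw [← Finset.prod_mul_distrib]
    refine Finset.prod_congr rfl fun j _ => ?_
    have h := geom_sum_mul ((X : ℤ[X])^j) m
    have hpow : (((X : ℤ[X])^j))^m = X^(m*j) := by rw [← pow_mul, Nat.mul_comm]
    rw [hpow] at h
    linear_combination -h
  · intro k hk
    simp only [Finset.mem_Icc] at hk
    have hak : k*p/m ≤ p-1 := ha k hk.1 hk.2
    simp only [dif_pos hak]
    exact Classical.choose_spec (gbm_exists m (p-1) (k*p/m) hak)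
  -- the congruence
  set f : ℤ[X] := ∏ j ∈ Finset.Icc 1 (p-1), (∑ i ∈ Finset.range m, ((X : ℤ[X])^j)^i) with hfdef
  set B : ℕ → ℤ[X] :=
    fun k => if h : k*p/m ≤ p - 1 then Classical.choose (gbm_exists m (p-1) (k*p/m) h) else 0
    with hBdef
  have hfspec : f * (∏ j ∈ Finset.Icc 1 (p-1), (1 - X^j))
      = (∏ j ∈ Finset.Icc 1 (p-1), (1 - X^(m*j))) := by
    rw [hfdef, ← Finset.prod_mul_distrib]
    refine Finset.prod_congr rfl fun j _ => ?_
    have h := geom_sum_mul ((X : ℤ[X])^j) m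
    have hpow : (((X : ℤ[X])^j))^m = X^(m*j) := by rw [← pow_mul, Nat.mul_comm]
    rw [hpow] at h
    linear_combination -h
  have hBspec : ∀ k ∈ Finset.Icc 1 (m-1),
      B k * (∏ j ∈ Finset.Icc 1 (k*p/m), (1 - X^(m*j)))
          * (∏ j ∈ Finset.Icc 1 ((p-1) - k*p/m), (1 - X^(m*j)))
        = (∏ j ∈ Finset.Icc 1 (p-1), (1 - X^(m*j))) := by
    intro k hk
    simp only [Finset.mem_Icc] at hk
    have hak : k*p/m ≤ p-1 := ha k hk.1 hk.2
    rw [hBdef]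
    simp only [dif_pos hak]
    exact Classical.choose_spec (gbm_exists m (p-1) (k*p/m) hak)
  -- transfer to Qt p
  set ρ : ℤ[X] →+* Qt p := (qmk p).comp (Polynomial.mapRingHom (Int.castRingHom ℚ)) with hρdef
  have hρX : ρ X = om p := by
    rw [hρdef]
    simp only [RingHom.comp_apply, Polynomial.coe_mapRingHom, Polynomial.map_X]
    rfl
  set G : ℤ[X] := (-1)^((p-1)*(m-1)/2)
      * X^(m * ∑ k ∈ Finset.Icc 1 (m-1), Nat.choose (k*p/m + 1) 2)
      * (∏ k ∈ Finset.Icc 1 (m-1), B k)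
    - ((m : ℤ[X]) * f - (m : ℤ[X]) + 1) with hGdef
  have hmonic : ((∑ i ∈ Finset.range p, (X : ℤ[X])^i)^2).Monic := by
    have : (∑ i ∈ Finset.range p, (X : ℤ[X])^i) = Polynomial.cyclotomic p ℤ :=
      (Polynomial.cyclotomic_prime ℤ p).symm
    rw [this]
    exact (Polynomial.cyclotomic.monic p ℤ).pow 2
  suffices hQ : ρ G = 0 by
    have hmem : Polynomial.map (Int.castRingHom ℚ) G ∈ Ideal.span {(PhiQ p)^2} := by
      apply Ideal.Quotient.eq_zero_iff_mem.mp
      exact hQ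
    have hdvd : (PhiQ p)^2 ∣ Polynomial.map (Int.castRingHom ℚ) G :=
      Ideal.mem_span_singleton.mp hmem
    have hmap : Polynomial.map (Int.castRingHom ℚ) ((∑ i ∈ Finset.range p, (X : ℤ[X])^i)^2)
        = (PhiQ p)^2 := by
      rw [Polynomial.map_pow, PhiQ]
      congr 1
      simp [Polynomial.map_sum]
    exact (Polynomial.map_dvd_map (Int.castRingHom ℚ) Int.cast_injective hmonic).mp (by rw [hmap]; exact hdvd)
  -- images of the defining equations
  have hD : ∀ a : ℕ, (∏ j ∈ Finset.Icc 1 a, (1 - (om p)^(m*j))) = D p m a := fun _ => rfl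
  have hBimg : ∀ k ∈ Finset.Icc 1 (m-1),
      ρ (B k) * D p m (k*p/m) * D p m ((p-1) - k*p/m) = D p m (p-1) := by
    intro k hk
    have := congrArg ρ (hBspec k hk)
    simpa only [map_mul, map_prod, map_sub, map_one, map_pow, hρX, hD] using this
  have hFimg : ρ f * Cc p = D p m (p-1) := by
    have := congrArg ρ hfspec
    simpa only [map_mul, map_prod, map_sub, map_one, map_pow, hρX, hD, Cc] using this
  have EqA := B_prod hp hpm hm h5 (fun k => ρ (B k)) hBimg
  have EqB := stepB hp hpm (ρ f) hFimg
  have EqF := final_sum hp hpm hm h5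
  have EqS : ((-1 : Qt p))^((p-1)*(m-1)/2) * ((-1 : Qt p))^((p-1)*(m-1)/2) = 1 := by
    rw [← mul_pow]
    norm_num
  -- expand ρ G
  rw [hGdef]
  simp only [map_sub, map_add, map_mul, map_pow, map_one, map_natCast, map_prod, map_neg, hρX]
  rw [EqB]
  linear_combination ((-1 : Qt p))^((p-1)*(m-1)/2) * EqA
    + (1 - (m : Qt p) * ep p * ∑ k ∈ Finset.Icc 1 (m-1), S p m (k*p/m)) * EqS
    - (m : Qt p) * EqF
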